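/- For every ℓ ≥ 1 and ω ≥ 2, E(ℓ,ω) ≥ log_2(ℓ)/log_2(ω/(ω−1)) + log_2(e)/(ℓ log_2(ω/(ω−1))). -/

import Mathlib

open Finset

/-- `γ_{ω,m} = (1/ω^m) ∑_{i=1}^{ω} C(ω,i) (-1)^{i+1} (ω-i)^m`. -/
noncomputable def gam (w m : ℕ) : ℝ :=
  (1 / (w : ℝ) ^ m) * ∑ i ∈ Icc 1 w, (w.choose i : ℝ) * (-1) ^ (i + 1) * ((w - i : ℕ) : ℝ) ^ m

section Comb

variable {w m : ℕ}

/-- functions avoiding value `i` -/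
def avoid (w m : ℕ) (i : Fin w) : Finset (Fin m → Fin w) :=
  Finset.univ.filter (fun f => ∀ x, f x ≠ i)

lemma card_inf_avoid (t : Finset (Fin w)) (ht : t.Nonempty) :
    #(t.inf' ht (avoid w m)) = (w - #t) ^ m := by
  have : t.inf' ht (avoid w m) = Fintype.piFinset (fun _ : Fin m => tᶜ) := by
    ext f
    simp only [mem_inf', Fintype.mem_piFinset, avoid, mem_filter, mem_univ, true_and, mem_compl]
    exact ⟨fun h x hx => h _ hx x rfl, fun h i hi x hfx => h x (hfx ▸ hi)⟩
  rw [this, Fintype.card_piFinset]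
  simp [card_compl]

lemma card_biUnion_avoid :
    (#(Finset.univ.biUnion (avoid w m)) : ℤ)
      = ∑ i ∈ Icc 1 w, (w.choose i : ℤ) * (-1) ^ (i + 1) * ((w - i : ℕ) : ℤ) ^ m := by
  rw [Finset.inclusion_exclusion_card_biUnion]
  have h1 : (∑ t : ((univ : Finset (Fin w)).powerset.filter (·.Nonempty)),
      (-1 : ℤ) ^ (#t.1 + 1) * #(t.1.inf' (mem_filter.1 t.2).2 (avoid w m)))
      = ∑ t ∈ (univ : Finset (Fin w)).powerset.filter (·.Nonempty),
        (-1 : ℤ) ^ (#t + 1) * ((w - #t : ℕ) : ℤ) ^ m := by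
    rw [← Finset.sum_attach ((univ : Finset (Fin w)).powerset.filter (·.Nonempty))
      (fun t => (-1 : ℤ) ^ (#t + 1) * ((w - #t : ℕ) : ℤ) ^ m)]
    refine Finset.sum_congr rfl fun t _ => ?_
    rw [card_inf_avoid _ (mem_filter.1 t.2).2]
    push_cast
    ring
  rw [h1, Finset.sum_filter]
  rw [Finset.sum_powerset]
  have h2 : ∀ j ∈ range (#(univ : Finset (Fin w)) + 1),
      (∑ t ∈ powersetCard j (univ : Finset (Fin w)),
        (if t.Nonempty then (-1 : ℤ) ^ (#t + 1) * ((w - #t : ℕ) : ℤ) ^ m else 0))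
      = (if j = 0 then 0 else (w.choose j : ℤ) * (-1) ^ (j + 1) * ((w - j : ℕ) : ℤ) ^ m) := by
    intro j _
    have : ∀ t ∈ powersetCard j (univ : Finset (Fin w)),
        (if t.Nonempty then (-1 : ℤ) ^ (#t + 1) * ((w - #t : ℕ) : ℤ) ^ m else 0)
        = (if j = 0 then 0 else (-1) ^ (j + 1) * ((w - j : ℕ) : ℤ) ^ m) := by
      intro t ht
      have hc : #t = j := (mem_powersetCard.1 ht).2
      subst hc
      rcases t.eq_empty_or_nonempty with rfl | ht'
      · simp
      · rw [if_pos ht', if_neg (by simpa [← card_pos] using ht'.card_pos.ne')]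
    rw [Finset.sum_congr rfl this, Finset.sum_const, Finset.card_powersetCard, card_univ,
      Fintype.card_fin]
    split_ifs <;> simp [mul_comm, mul_assoc, mul_left_comm]
  rw [Finset.sum_congr rfl h2]
  rw [show #(univ : Finset (Fin w)) = w by simp]
  rw [← Finset.sum_subset (show Icc 1 w ⊆ range (w+1) by intro x hx; simp at hx ⊢; omega)
    (fun x hr hx => by rw [if_pos (by simp at hr hx ⊢; omega)])]
  refine Finset.sum_congr rfl fun j hj => ?_
  rw [if_neg (by simp at hj; omega)]

lemma gam_eq_card (hw : 1 ≤ w) :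
    gam w m = (#(Finset.univ.biUnion (avoid w m)) : ℝ) / (w : ℝ) ^ m := by
  have h := card_biUnion_avoid (w := w) (m := m)
  have h2 : ((#(Finset.univ.biUnion (avoid w m)) : ℤ) : ℝ)
      = ((∑ i ∈ Icc 1 w, (w.choose i : ℤ) * (-1) ^ (i + 1) * ((w - i : ℕ) : ℤ) ^ m : ℤ) : ℝ) := by
    exact_mod_cast congrArg (Int.cast : ℤ → ℝ) h
  push_cast at h2
  rw [gam, ← h2]
  push_cast
  ring

lemma card_avoid_lb (hw : 1 ≤ w) (i : Fin w) :
    (w - 1) ^ m ≤ #(Finset.univ.biUnion (avoid w m)) := by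
  have hsub : avoid w m i ⊆ Finset.univ.biUnion (avoid w m) :=
    Finset.subset_biUnion_of_mem (avoid w m) (mem_univ i)
  have hs : ({i} : Finset (Fin w)).inf' ⟨i, mem_singleton_self i⟩ (avoid w m) = avoid w m i := by
    simp
  have hcard := card_inf_avoid (m := m) ({i} : Finset (Fin w)) ⟨i, mem_singleton_self i⟩
  rw [hs, card_singleton] at hcard
  rw [← hcard]
  exact Finset.card_le_card hsub

lemma card_avoid_ub :
    #(Finset.univ.biUnion (avoid w m)) ≤ w ^ m := by
  have := Finset.card_le_univ (Finset.univ.biUnion (avoid w m))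
  simpa [Fintype.card_fun] using this

lemma card_avoid_ub' (hw : 1 ≤ w) :
    #(Finset.univ.biUnion (avoid w m)) ≤ w * (w - 1) ^ m := by
  refine (Finset.card_biUnion_le).trans ?_
  have : ∀ i ∈ (univ : Finset (Fin w)), #(avoid w m i) = (w - 1) ^ m := by
    intro i _
    have hs : ({i} : Finset (Fin w)).inf' ⟨i, mem_singleton_self i⟩ (avoid w m) = avoid w m i := by
      simp
    have hcard := card_inf_avoid (m := m) ({i} : Finset (Fin w)) ⟨i, mem_singleton_self i⟩
    rw [hs, card_singleton] at hcard
    rw [hcard]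
  rw [Finset.sum_congr rfl this, Finset.sum_const, card_univ, Fintype.card_fin, smul_eq_mul]

end Comb

section GamBounds

variable {w m : ℕ}

lemma wpos (hw : 1 ≤ w) : (0:ℝ) < (w:ℝ) := by exact_mod_cast (by omega : 0 < w)

lemma cast_sub_one (hw : 1 ≤ w) : ((w - 1 : ℕ) : ℝ) = (w:ℝ) - 1 := by
  rw [Nat.cast_sub hw]; simp

lemma gam_ge (hw : 2 ≤ w) : (((w : ℝ) - 1) / w) ^ m ≤ gam w m := by
  have hw1 : 1 ≤ w := by omega
  have hwp := wpos hw1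
  have hlb := card_avoid_lb (w := w) (m := m) hw1 ⟨0, by omega⟩
  rw [gam_eq_card hw1, div_pow, ← cast_sub_one hw1]
  have h2 : (((w-1:ℕ):ℝ))^m ≤ (#(Finset.univ.biUnion (avoid w m)) : ℝ) := by
    exact_mod_cast hlb
  gcongr

lemma gam_le_one (hw : 1 ≤ w) : gam w m ≤ 1 := by
  have hwp := wpos hw
  rw [gam_eq_card hw, div_le_one (by positivity)]
  exact_mod_cast card_avoid_ub (w := w) (m := m)

lemma gam_le (hw : 2 ≤ w) : gam w m ≤ w * (((w : ℝ) - 1) / w) ^ m := by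
  have hw1 : 1 ≤ w := by omega
  have hwp := wpos hw1
  rw [gam_eq_card hw1, div_pow, ← cast_sub_one hw1, div_le_iff₀ (by positivity)]
  have h2 : (#(Finset.univ.biUnion (avoid w m)) : ℝ) ≤ (w:ℝ) * ((w-1:ℕ):ℝ)^m := by
    exact_mod_cast card_avoid_ub' (w := w) (m := m) hw1
  calc (#(Finset.univ.biUnion (avoid w m)) : ℝ) ≤ (w:ℝ) * ((w-1:ℕ):ℝ)^m := h2
    _ = (w:ℝ) * (((w-1:ℕ):ℝ)^m / (w:ℝ)^m) * (w:ℝ)^m := by field_simp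
    _ = _ := by ring

lemma gam_nonneg (hw : 2 ≤ w) : 0 ≤ gam w m := by
  refine le_trans ?_ (gam_ge hw)
  have hwp := wpos (by omega : 1 ≤ w)
  have : (0:ℝ) ≤ ((w:ℝ)-1)/w := by
    apply div_nonneg _ hwp.le
    have : (2:ℝ) ≤ (w:ℝ) := by exact_mod_cast hw
    linarith
  positivity

end GamBounds

section Analysis
open Real Filter

lemma expand_pow (u : ℝ) (l : ℕ) :
    1 - (1 - u) ^ l = ∑ j ∈ Icc 1 l, (l.choose j : ℝ) * (-1) ^ (j + 1) * u ^ j := by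
  have h := add_pow (-u) 1 l
  rw [show -u + 1 = 1 - u by ring] at h
  rw [h, show range (l+1) = insert 0 (Icc 1 l) by ext x; simp; omega,
    Finset.sum_insert (show (0:ℕ) ∉ Icc 1 l by simp)]
  rw [show ∀ a b : ℝ, 1 - (a + b) = -b + (1 - a) from fun a b => by ring]
  simp only [pow_zero, one_pow, one_mul, Nat.choose_zero_right, Nat.cast_one, mul_one, sub_self,
    add_zero, ← Finset.sum_neg_distrib]
  refine Finset.sum_congr rfl fun j hj => ?_
  rw [neg_pow]
  ring

lemma integral_exp_neg_mul (c : ℝ) (hc : 0 < c) (N : ℝ) :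
    ∫ x in (0:ℝ)..N, Real.exp (-(c*x)) = (1 - Real.exp (-(c*N)))/c := by
  have hder : ∀ x ∈ Set.uIcc (0:ℝ) N,
      HasDerivAt (fun y => -Real.exp (-(c*y))/c) (Real.exp (-(c*x))) x := by
    intro x _
    have h1 : HasDerivAt (fun y : ℝ => -(c*y)) (-c) x := by
      exact (((hasDerivAt_id x).const_mul c).neg).congr_deriv (by simp)
    have h2 := (h1.exp.neg).div_const c
    refine h2.congr_deriv ?_
    field_simp
  rw [intervalIntegral.integral_eq_sub_of_hasDerivAt hder
    ((Continuous.intervalIntegrable (by continuity) _ _))]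
  rw [mul_zero, neg_zero, Real.exp_zero]
  ring

lemma alt_sum_choose (l : ℕ) :
    ∑ j ∈ Icc 1 (l+1), ((l+1).choose j : ℝ) * (-1) ^ (j+1) = 1 := by
  have h := Int.alternating_sum_range_choose_of_ne (n := l+1) (by omega)
  rw [show range (l+2) = insert 0 (Icc 1 (l+1)) by ext x; simp; omega,
    Finset.sum_insert (show (0:ℕ) ∉ Icc 1 (l+1) by simp)] at h
  simp only [pow_zero, Nat.choose_zero_right, Nat.cast_one, one_mul] at h
  have h2 : (∑ j ∈ Icc 1 (l+1), (-1:ℤ) ^ j * ((l+1).choose j)) = -1 := by linarith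
  have h2R : (∑ j ∈ Icc 1 (l+1), (-1:ℝ) ^ j * ((l+1).choose j)) = -1 := by
    exact_mod_cast h2
  have h3 : (∑ j ∈ Icc 1 (l+1), ((l+1).choose j : ℝ) * (-1) ^ (j+1))
      = -(∑ j ∈ Icc 1 (l+1), (-1:ℝ) ^ j * ((l+1).choose j)) := by
    rw [← Finset.sum_neg_distrib]
    exact Finset.sum_congr rfl fun j _ => by ring
  rw [h3, h2R]
  norm_num

lemma binom_harmonic (l : ℕ) :
    ∑ j ∈ Icc 1 l, (l.choose j : ℝ) * (-1) ^ (j + 1) / j = ∑ i ∈ Icc 1 l, (1:ℝ) / i := by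
  induction l with
  | zero => simp
  | succ l ih =>
    have key : ∑ j ∈ Icc 1 (l+1), ((l+1).choose j : ℝ) * (-1) ^ (j + 1) / j
        = (∑ j ∈ Icc 1 l, (l.choose j : ℝ) * (-1) ^ (j + 1) / j) + 1/(l+1) := by
      have split : ∀ j ∈ Icc 1 (l+1), ((l+1).choose j : ℝ) * (-1) ^ (j + 1) / j
          = (l.choose j : ℝ) * (-1) ^ (j + 1) / j
            + ((l+1).choose j : ℝ) * (-1) ^ (j+1) / (l+1) := by
        intro j hj
        simp only [mem_Icc] at hj
        obtain ⟨hj1, hj2⟩ := hj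
        obtain ⟨k, rfl⟩ := Nat.exists_eq_add_of_le hj1
        have hpascal : (l+1).choose (1+k) = l.choose k + l.choose (1+k) := by
          rw [show 1+k = k+1 by omega, Nat.choose_succ_succ']
        have hmul : (l+1) * l.choose k = (l+1).choose (1+k) * (1+k) := by
          rw [show 1+k = k+1 by omega, ← Nat.add_one_mul_choose_eq]
        have hpascalR : (((l+1).choose (1+k) : ℝ)) = (l.choose k : ℝ) + (l.choose (1+k) : ℝ) := by
          exact_mod_cast hpascal
        have hmulR : ((l:ℝ)+1) * (l.choose k : ℝ) = ((l+1).choose (1+k) : ℝ) * (1+(k:ℝ)) := by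
          exact_mod_cast hmul
        have hne1 : ((1:ℝ)+(k:ℝ)) ≠ 0 := by positivity
        have hne2 : ((l:ℝ)+1) ≠ 0 := by positivity
        have base : ((l+1).choose (1+k) : ℝ) / (1+(k:ℝ))
            = (l.choose (1+k) : ℝ) / (1+(k:ℝ)) + ((l+1).choose (1+k) : ℝ) / ((l:ℝ)+1) := by
          rw [div_add_div _ _ hne1 hne2, div_eq_div_iff hne1 (mul_ne_zero hne1 hne2)]
          linear_combination ((1:ℝ)+(k:ℝ)) * hmulR + ((1:ℝ)+(k:ℝ)) * ((l:ℝ)+1) * hpascalR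
        push_cast
        calc ((l+1).choose (1+k) : ℝ) * (-1) ^ (1+k+1) / (1+(k:ℝ))
            = (-1:ℝ) ^ (1+k+1) * (((l+1).choose (1+k) : ℝ) / (1+(k:ℝ))) := by ring
          _ = (-1:ℝ) ^ (1+k+1) * ((l.choose (1+k) : ℝ) / (1+(k:ℝ))
                + ((l+1).choose (1+k) : ℝ) / ((l:ℝ)+1)) := by rw [base]
          _ = (l.choose (1+k) : ℝ) * (-1) ^ (1+k+1) / (1+(k:ℝ))
                + ((l+1).choose (1+k) : ℝ) * (-1) ^ (1+k+1) / ((l:ℝ)+1) := by ring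
      rw [Finset.sum_congr rfl split, Finset.sum_add_distrib]
      congr 1
      · rw [← Finset.sum_subset (show Icc 1 l ⊆ Icc 1 (l+1) by
          intro x hx; simp at hx ⊢; omega)
          (fun x hx hx2 => by
            have hx3 : x = l+1 := by simp at hx hx2; omega
            simp [hx3, Nat.choose_succ_self])]
      · calc ∑ j ∈ Icc 1 (l+1), ((l+1).choose j : ℝ) * (-1) ^ (j+1) / ((l:ℝ)+1)
            = ∑ j ∈ Icc 1 (l+1), ((l+1).choose j : ℝ) * (-1) ^ (j+1) * (1/((l:ℝ)+1)) :=
              Finset.sum_congr rfl fun j _ => by ring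
          _ = (∑ j ∈ Icc 1 (l+1), ((l+1).choose j : ℝ) * (-1) ^ (j+1)) * (1/((l:ℝ)+1)) := by
              rw [← Finset.sum_mul]
          _ = 1/((l:ℝ)+1) := by rw [alt_sum_choose]; ring

    rw [key, ih, Finset.sum_Icc_succ_top (by omega : 1 ≤ l+1)]
    push_cast
    ring

lemma harmonic_ge (l : ℕ) (hl : 1 ≤ l) :
    Real.log l + 1/l ≤ ∑ i ∈ Icc 1 l, (1:ℝ)/i := by
  induction l with
  | zero => omega
  | succ l ih =>
    rcases Nat.eq_or_lt_of_le hl with h1 | h2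
    · simp [← h1]
    · have hl1 : 1 ≤ l := by omega
      have ihh := ih hl1
      rw [Finset.sum_Icc_succ_top (by omega : 1 ≤ l+1)]
      have hlog : Real.log ((l:ℝ)+1) ≤ Real.log l + 1/l := by
        have hlp : (0:ℝ) < l := by exact_mod_cast hl1
        have h3 : Real.log (((l:ℝ)+1)/l) ≤ ((l:ℝ)+1)/l - 1 :=
          Real.log_le_sub_one_of_pos (by positivity)
        rw [Real.log_div (by positivity) (ne_of_gt hlp)] at h3
        have h4 : ((l:ℝ)+1)/l - 1 = 1/l := by field_simp; ring
        linarith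
      have : (1:ℝ)/((l:ℝ)+1) ≤ 1/((l:ℝ)+1) := le_refl _
      push_cast
      linarith

lemma tsum_geom_pow_ge (l : ℕ) (hl : 1 ≤ l) (q : ℝ) (hq0 : 0 < q) (hq1 : q < 1) :
    (∑ i ∈ Icc 1 l, (1:ℝ)/i) / (-Real.log q) ≤ ∑' m : ℕ, (1 - (1 - q ^ m) ^ l) := by
  have hLpos : 0 < -Real.log q := by
    have := Real.log_neg hq0 hq1
    linarith
  set L : ℝ := -Real.log q with hL
  set f : ℝ → ℝ := fun x => 1 - (1 - Real.exp (-(L * x))) ^ l with hf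
  have hqm : ∀ m : ℕ, q ^ m = Real.exp (-(L * m)) := by
    intro m
    rw [hL, neg_mul, neg_neg, mul_comm, Real.exp_nat_mul, Real.exp_log hq0]
  have hfm : ∀ m : ℕ, f m = 1 - (1 - q ^ m) ^ l := by
    intro m; rw [hf]; simp only; rw [hqm m]
  -- term bounds
  have hexple : ∀ x : ℝ, 0 ≤ x → Real.exp (-(L * x)) ≤ 1 := by
    intro x hx
    rw [Real.exp_le_one_iff]
    nlinarith
  have hterm_nonneg : ∀ x : ℝ, 0 ≤ x → 0 ≤ f x := by
    intro x hx
    have h1 : (1 - Real.exp (-(L * x))) ^ l ≤ 1 := by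
      apply pow_le_one₀ (by linarith [hexple x hx]) (by linarith [Real.exp_pos (-(L*x))])
    simp only [hf]
    linarith
  have hterm_le : ∀ m : ℕ, 1 - (1 - q ^ m) ^ l ≤ l * q ^ m := by
    intro m
    have hb := one_add_mul_le_pow (a := -(q^m)) (by nlinarith [pow_le_one₀ hq0.le hq1.le (n := m), pow_nonneg hq0.le m]) l
    simp only [mul_neg, ← sub_eq_add_neg] at hb
    linarith
  have hsum : Summable (fun m : ℕ => 1 - (1 - q ^ m) ^ l) := by
    apply Summable.of_nonneg_of_le (fun m => by rw [← hfm m]; exact hterm_nonneg m (Nat.cast_nonneg m)) hterm_le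
    exact (summable_geometric_of_lt_one hq0.le hq1).mul_left _
  -- antitone
  have hant : AntitoneOn f (Set.Ici (0:ℝ)) := by
    intro x hx y hy hxy
    simp only [hf]
    have h1 : Real.exp (-(L*y)) ≤ Real.exp (-(L*x)) := by
      apply Real.exp_le_exp.2; nlinarith
    have h2 : (0:ℝ) ≤ 1 - Real.exp (-(L*x)) := by linarith [hexple x hx]
    have h3 : (1 - Real.exp (-(L*x)))^l ≤ (1 - Real.exp (-(L*y)))^l :=
      pow_le_pow_left₀ h2 (by linarith) l
    linarith
  -- partial integral bounds
  have hIle : ∀ N : ℕ, (∫ x in (0:ℝ)..(N:ℝ), f x) ≤ ∑' m : ℕ, (1 - (1 - q ^ m) ^ l) := by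
    intro N
    have h1 : (∫ x in (0:ℝ)..(0 + (N:ℝ)), f x) ≤ ∑ i ∈ range N, f (0 + i) := by
      apply AntitoneOn.integral_le_sum
      apply hant.mono
      intro z hz
      simp at hz ⊢
      exact hz.1
    rw [zero_add] at h1
    refine h1.trans ?_
    have h2 : ∑ i ∈ range N, f (0 + (i:ℝ)) = ∑ i ∈ range N, (1 - (1 - q ^ i) ^ l) := by
      refine Finset.sum_congr rfl fun i _ => ?_
      rw [zero_add, hfm i]
    rw [h2]
    exact Summable.sum_le_tsum (range N) (fun m _ => by linarith [hterm_nonneg m (Nat.cast_nonneg m), hfm m]) hsum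
  -- compute the integral
  have hI : ∀ N : ℕ, (∫ x in (0:ℝ)..(N:ℝ), f x)
      = ∑ j ∈ Icc 1 l, (l.choose j : ℝ) * (-1) ^ (j + 1) * ((1 - Real.exp (-(L*j*N)))/(L*j)) := by
    intro N
    have hfx : ∀ x : ℝ, f x = ∑ j ∈ Icc 1 l, (l.choose j : ℝ) * (-1) ^ (j + 1) * Real.exp (-(L*j*x)) := by
      intro x
      rw [hf]
      simp only
      rw [expand_pow]
      refine Finset.sum_congr rfl fun j hj => ?_
      rw [← Real.exp_nat_mul]
      ring_nf
    rw [intervalIntegral.integral_congr (g := fun x => ∑ j ∈ Icc 1 l, (l.choose j : ℝ) * (-1) ^ (j + 1) * Real.exp (-(L*j*x))) (fun x _ => hfx x)]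
    rw [intervalIntegral.integral_finset_sum (fun j _ => (Continuous.intervalIntegrable (by continuity) _ _))]
    refine Finset.sum_congr rfl fun j hj => ?_
    have hjpos : 0 < (j:ℝ) := by
      simp only [mem_Icc] at hj; exact_mod_cast Nat.lt_of_lt_of_le Nat.zero_lt_one hj.1
    have hcpos : 0 < L * j := by positivity
    rw [intervalIntegral.integral_const_mul]
    congr 1
    have := integral_exp_neg_mul (L*j) hcpos N
    rw [show ∀ x:ℝ, -(L*(j:ℝ)*x) = -(L*j*x) from fun x => rfl] at this
    exact this
  -- limit
  set A : ℝ := ∑ j ∈ Icc 1 l, (l.choose j : ℝ) * (-1) ^ (j + 1) * (1/(L*j)) with hA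
  have htend : Tendsto (fun N : ℕ => ∫ x in (0:ℝ)..(N:ℝ), f x) atTop (nhds A) := by
    simp only [hI]
    rw [hA]
    apply tendsto_finset_sum
    intro j hj
    have hjpos : 0 < (j:ℝ) := by
      simp only [mem_Icc] at hj; exact_mod_cast Nat.lt_of_lt_of_le Nat.zero_lt_one hj.1
    apply Tendsto.const_mul
    apply Tendsto.div_const
    have h0 : Tendsto (fun N : ℕ => Real.exp (-(L*j*N))) atTop (nhds 0) := by
      have heq : ∀ N : ℕ, Real.exp (-(L*j*N)) = (Real.exp (-(L*j)))^N := by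
        intro N
        rw [← Real.exp_nat_mul]
        ring_nf
      simp only [heq]
      apply tendsto_pow_atTop_nhds_zero_of_lt_one (Real.exp_nonneg _)
      rw [Real.exp_lt_one_iff]
      nlinarith
    have := h0.const_sub 1
    simpa using this
  -- conclude
  have hge : A ≤ ∑' m : ℕ, (1 - (1 - q ^ m) ^ l) :=
    le_of_tendsto htend (Filter.Eventually.of_forall hIle)
  refine le_trans (le_of_eq ?_) hge
  rw [hA, ← binom_harmonic l, Finset.sum_div]
  refine Finset.sum_congr rfl fun j hj => ?_
  have hjpos : 0 < (j:ℝ) := by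
    simp only [mem_Icc] at hj; exact_mod_cast Nat.lt_of_lt_of_le Nat.zero_lt_one hj.1
  rw [div_div, eq_comm, mul_one_div, div_eq_div_iff (by positivity) (by positivity)]
  ring

end Analysis

/-- `E(ℓ,ω) = ∑_{m=0}^∞ (1 - (1 - γ_{ω,m})^ℓ)` satisfies
`E(ℓ,ω) ≥ log₂(ℓ)/log₂(ω/(ω-1)) + log₂(e)/(ℓ log₂(ω/(ω-1)))`. -/
theorem stmt_6 (ℓ w : ℕ) (hℓ : 1 ≤ ℓ) (hw : 2 ≤ w) :
    Real.logb 2 ℓ / Real.logb 2 ((w : ℝ) / ((w : ℝ) - 1))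
        + Real.logb 2 (Real.exp 1) / ((ℓ : ℝ) * Real.logb 2 ((w : ℝ) / ((w : ℝ) - 1)))
      ≤ ∑' m : ℕ, (1 - (1 - gam w m) ^ ℓ) := by
  have hw1 : 1 ≤ w := by omega
  have hwR : (2:ℝ) ≤ (w:ℝ) := by exact_mod_cast hw
  set q : ℝ := ((w:ℝ)-1)/w with hq
  have hq0 : 0 < q := by rw [hq]; apply div_pos <;> linarith
  have hq1 : q < 1 := by rw [hq, div_lt_one (by linarith)]; linarith
  have hinv : (w:ℝ)/((w:ℝ)-1) = q⁻¹ := by rw [hq, inv_div]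
  have hlogq : Real.log ((w:ℝ)/((w:ℝ)-1)) = -Real.log q := by rw [hinv, Real.log_inv]
  have hL : 0 < -Real.log q := by have := Real.log_neg hq0 hq1; linarith
  have hlog2 : (0:ℝ) < Real.log 2 := Real.log_pos (by norm_num)
  have hℓR : (1:ℝ) ≤ (ℓ:ℝ) := by exact_mod_cast hℓ
  have hLHS : Real.logb 2 ℓ / Real.logb 2 ((w : ℝ) / ((w : ℝ) - 1))
        + Real.logb 2 (Real.exp 1) / ((ℓ : ℝ) * Real.logb 2 ((w : ℝ) / ((w : ℝ) - 1)))
      = (Real.log ℓ + 1/ℓ) / (-Real.log q) := by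
    simp only [Real.logb, Real.log_exp]
    rw [hlogq]
    have habs : ∀ (X Lq lR : ℝ), Lq ≠ 0 → lR ≠ 0 →
        X / Real.log 2 / (Lq / Real.log 2) + 1 / Real.log 2 / (lR * (Lq / Real.log 2))
          = (X + 1/lR)/Lq := by
      intro X Lq lR h1 h2
      have hx : Real.log 2 ≠ 0 := hlog2.ne'
      field_simp
    exact habs _ _ _ hL.ne' (by linarith)
  rw [hLHS]
  have h1 : Real.log ℓ + 1/ℓ ≤ ∑ i ∈ Icc 1 ℓ, (1:ℝ)/i := harmonic_ge ℓ hℓ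
  have h2 := tsum_geom_pow_ge ℓ hℓ q hq0 hq1
  have hupper_nonneg : ∀ m : ℕ, 0 ≤ 1 - (1 - gam w m)^ℓ := by
    intro m
    have ha := gam_le_one (w:=w) (m:=m) hw1
    have h0 := gam_nonneg (w:=w) (m:=m) hw
    have : (1 - gam w m)^ℓ ≤ 1 := pow_le_one₀ (by linarith) (by linarith)
    linarith
  have hterm_mono : ∀ m : ℕ, 1 - (1 - q^m)^ℓ ≤ 1 - (1 - gam w m)^ℓ := by
    intro m
    have hg := gam_ge (w:=w) (m:=m) hw
    have hle1 := gam_le_one (w:=w) (m:=m) hw1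
    have : (1 - gam w m)^ℓ ≤ (1 - q^m)^ℓ := by
      apply pow_le_pow_left₀ (by linarith)
      rw [hq]
      linarith [gam_ge (w:=w) (m:=m) hw]
    linarith
  have hupper_le : ∀ m : ℕ, 1 - (1 - gam w m)^ℓ ≤ ((ℓ:ℝ)*w) * q^m := by
    intro m
    have hle1 := gam_le_one (w:=w) (m:=m) hw1
    have hb := one_add_mul_le_pow (a := -(gam w m)) (by linarith) ℓ
    simp only [mul_neg, ← sub_eq_add_neg] at hb
    have hgu := gam_le (w:=w) (m:=m) hw
    have hqm : gam w m ≤ (w:ℝ) * q^m := by rw [hq]; exact hgu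
    have hℓ0 : (0:ℝ) ≤ (ℓ:ℝ) := by positivity
    nlinarith
  have hsum_upper : Summable (fun m : ℕ => 1 - (1 - gam w m)^ℓ) :=
    Summable.of_nonneg_of_le hupper_nonneg hupper_le
      ((summable_geometric_of_lt_one hq0.le hq1).mul_left _)
  have hsum_lower : Summable (fun m : ℕ => 1 - (1 - q^m)^ℓ) := by
    apply Summable.of_nonneg_of_le _ hterm_mono hsum_upper
    intro m
    have hqm1 : q^m ≤ 1 := pow_le_one₀ hq0.le hq1.le
    have hqm0 : (0:ℝ) ≤ q^m := by positivity
    have : (1 - q^m)^ℓ ≤ 1 := pow_le_one₀ (by linarith) (by linarith)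
    linarith
  have h3 : (∑' m : ℕ, (1 - (1 - q^m)^ℓ)) ≤ ∑' m : ℕ, (1 - (1 - gam w m)^ℓ) :=
    Summable.tsum_le_tsum hterm_mono hsum_lower hsum_upper
  calc (Real.log ℓ + 1/ℓ) / (-Real.log q)
      ≤ (∑ i ∈ Icc 1 ℓ, (1:ℝ)/i) / (-Real.log q) := by gcongr
    _ ≤ ∑' m : ℕ, (1 - (1 - q^m)^ℓ) := h2
    _ ≤ _ := h3
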